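/- Let X be the set of pairs (B, C), with B an n×k complex matrix and C a k×n complex matrix, satisfying Bᴴ·B − C·Cᴴ = 1 and C·B = 0, and let Y be the set of pairs (B, C) satisfying rank B = k and C·B = 0. Consider on X the equivalence relation (B₁,C₁) ∼ (B₂,C₂) iff there exists a unitary u ∈ U(k) with B₂ = B₁·u and C₂ = u⁻¹·C₁, and on Y the equivalence relation given by the analogous condition with u replaced by an arbitrary invertible g ∈ GL_k(ℂ). Then X ⊆ Y, and the inclusion X ↪ Y induces a bijection between the quotient X/U(k) and the quotient Y/GL_k(ℂ). -/

import Mathlib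

open Matrix

/-- Pairs `(B, C)` of an `n×k` and a `k×n` complex matrix. -/
abbrev MatPair (n k : ℕ) := Matrix (Fin n) (Fin k) ℂ × Matrix (Fin k) (Fin n) ℂ

/-- The level set `X = {(B,C) : Bᴴ B − C Cᴴ = 1, C B = 0}` of the hyperKähler
momentum map. -/
def levelSet (n k : ℕ) : Set (MatPair n k) :=
  {p | p.1ᴴ * p.1 - p.2 * p.2ᴴ = 1 ∧ p.2 * p.1 = 0}

/-- The set `Y = {(B,C) : rk B = k, C B = 0}`. -/
def fullRankSet (n k : ℕ) : Set (MatPair n k) :=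
  {p | p.1.rank = k ∧ p.2 * p.1 = 0}

/-- The equivalence on `X`: `(B₁,C₁) ∼ (B₂,C₂)` iff there is a unitary `u`
with `B₂ = B₁ u` and `C₂ = u⁻¹ C₁`. -/
def unitaryRel (n k : ℕ) (p q : levelSet n k) : Prop :=
  ∃ u : Matrix (Fin k) (Fin k) ℂ, uᴴ * u = 1 ∧
    (q : MatPair n k).1 = (p : MatPair n k).1 * u ∧
    (q : MatPair n k).2 = u⁻¹ * (p : MatPair n k).2

/-- The equivalence on `Y`: `(B₁,C₁) ∼ (B₂,C₂)` iff there is an invertible `g`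
with `B₂ = B₁ g` and `C₂ = g⁻¹ C₁`. -/
def glRel (n k : ℕ) (p q : fullRankSet n k) : Prop :=
  ∃ g : Matrix (Fin k) (Fin k) ℂ, IsUnit g ∧
    (q : MatPair n k).1 = (p : MatPair n k).1 * g ∧
    (q : MatPair n k).2 = g⁻¹ * (p : MatPair n k).2

set_option maxHeartbeats 1000000

open scoped ComplexOrder

namespace Matrix.PosSemidef

open scoped MatrixOrder

variable {k : ℕ}

/-- Square root of a positive semidefinite matrix (via the continuous functional calculus). -/
noncomputable def sqrt {M : Matrix (Fin k) (Fin k) ℂ} (_hM : M.PosSemidef) :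
    Matrix (Fin k) (Fin k) ℂ :=
  CFC.sqrt M

lemma posSemidef_sqrt {M : Matrix (Fin k) (Fin k) ℂ} (hM : M.PosSemidef) :
    hM.sqrt.PosSemidef :=
  (CFC.sqrt_nonneg M).posSemidef

lemma sqrt_mul_self {M : Matrix (Fin k) (Fin k) ℂ} (hM : M.PosSemidef) :
    hM.sqrt * hM.sqrt = M :=
  CFC.sqrt_mul_sqrt_self M hM.nonneg

lemma eq_of_sq_eq_sq {A B : Matrix (Fin k) (Fin k) ℂ} (hA : A.PosSemidef) (hB : B.PosSemidef)
    (h : A ^ 2 = B ^ 2) : A = B := by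
  rw [← CFC.sqrt_sq A hA.nonneg, h, CFC.sqrt_sq B hB.nonneg]

end Matrix.PosSemidef

namespace HKProofAux

variable {k n : ℕ}

lemma isUnit_of_mul_self_isUnit {M : Matrix (Fin k) (Fin k) ℂ}
    (h : IsUnit (M * M)) : IsUnit M := by
  rw [Matrix.isUnit_iff_isUnit_det] at h ⊢
  rw [Matrix.det_mul] at h
  exact isUnit_of_mul_isUnit_left h

lemma posDef_of_posSemidef_isUnit {M : Matrix (Fin k) (Fin k) ℂ}
    (hM : M.PosSemidef) (hu : IsUnit M) : M.PosDef := by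
  refine Matrix.posDef_iff_dotProduct_mulVec.mpr ⟨hM.1, fun x hx => ?_⟩
  have hs := hM.posSemidef_sqrt
  have hssq := hM.sqrt_mul_self
  have hin : Function.Injective (hM.sqrt.mulVec) :=
    mulVec_injective_iff_isUnit.mpr (isUnit_of_mul_self_isUnit (hssq.symm ▸ hu))
  have hne : hM.sqrt *ᵥ x ≠ 0 := fun h0 => hx (hin (by simpa using h0))
  have key : star x ⬝ᵥ M *ᵥ x = star (hM.sqrt *ᵥ x) ⬝ᵥ (hM.sqrt *ᵥ x) := by
    conv_rhs => rw [Matrix.star_mulVec, ← Matrix.dotProduct_mulVec,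
      Matrix.mulVec_mulVec, hs.1.eq, hssq]
  rw [key]
  exact Matrix.dotProduct_star_self_pos_iff.mpr hne

lemma isUnit_conjTranspose_mul_self {B : Matrix (Fin n) (Fin k) ℂ} (h : B.rank = k) :
    IsUnit (Bᴴ * B) := by
  have hr : (Bᴴ * B).rank = k := by rw [Matrix.rank_conjTranspose_mul_self, h]
  have hrange : LinearMap.range (Bᴴ * B).mulVecLin = ⊤ := by
    apply Submodule.eq_top_of_finrank_eq
    rw [← Matrix.rank] at *
    simp [hr]
  have hsurj : Function.Surjective (Bᴴ * B).mulVecLin := LinearMap.range_eq_top.mp hrange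
  have hinj : Function.Injective ((Bᴴ * B).mulVecLin) :=
    (LinearMap.injective_iff_surjective.mpr hsurj)
  exact Matrix.mulVec_injective_iff_isUnit.mp hinj

lemma sub_one_posSemidef {M : Matrix (Fin k) (Fin k) ℂ} (hM : M.PosDef)
    (hR : (M * M - M).PosSemidef) : (M - 1).PosSemidef := by
  have hH : M.IsHermitian := hM.1
  have hev : ∀ i, 1 ≤ hH.eigenvalues i := by
    intro i
    by_contra hlt
    push_neg at hlt
    have hpos : 0 < hH.eigenvalues i := hM.eigenvalues_pos i
    set lam := hH.eigenvalues i with hlam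
    set v := ⇑(hH.eigenvectorBasis i) with hv
    have hvne : v ≠ 0 := by
      simpa [hv] using hH.eigenvectorBasis.orthonormal.ne_zero i
    have hMv : M *ᵥ v = (lam : ℂ) • v := by
      have := hH.mulVec_eigenvectorBasis i
      rw [RCLike.real_smul_eq_coe_smul (K := ℂ)] at this
      exact this
    have hcalc : star v ⬝ᵥ (M * M - M) *ᵥ v = ((lam ^ 2 - lam : ℝ) : ℂ) * (star v ⬝ᵥ v) := by
      rw [Matrix.sub_mulVec, dotProduct_sub, ← Matrix.mulVec_mulVec, hMv,
        Matrix.mulVec_smul, hMv]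
      rw [smul_smul, dotProduct_smul, dotProduct_smul]
      push_cast
      simp only [smul_eq_mul]
      ring
    have hdpos : 0 < star v ⬝ᵥ v := Matrix.dotProduct_star_self_pos_iff.mpr hvne
    have hneg : ((lam ^ 2 - lam : ℝ) : ℂ) < 0 := by
      have : ((lam ^ 2 - lam : ℝ) : ℂ) < ((0 : ℝ) : ℂ) :=
        Complex.real_lt_real.mpr (by nlinarith)
      simpa using this
    have : star v ⬝ᵥ (M * M - M) *ᵥ v < 0 := by
      rw [hcalc]; exact mul_neg_of_neg_of_pos hneg hdpos
    exact absurd (hR.dotProduct_mulVec_nonneg v) this.not_ge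
  have hUU : (hH.eigenvectorUnitary : Matrix (Fin k) (Fin k) ℂ) *
      (star (hH.eigenvectorUnitary : Matrix (Fin k) (Fin k) ℂ)) = 1 :=
    Matrix.mem_unitaryGroup_iff.mp hH.eigenvectorUnitary.2
  have hD : diagonal (fun i => ((hH.eigenvalues i - 1 : ℝ) : ℂ)) =
      diagonal (RCLike.ofReal ∘ hH.eigenvalues) - 1 := by
    rw [← Matrix.diagonal_one, Matrix.diagonal_sub]
    congr 1
    funext i
    push_cast
    simp
  have key : M - 1 = (hH.eigenvectorUnitary : Matrix (Fin k) (Fin k) ℂ) *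
      diagonal (fun i => ((hH.eigenvalues i - 1 : ℝ) : ℂ)) *
      (star (hH.eigenvectorUnitary : Matrix (Fin k) (Fin k) ℂ)) := by
    rw [hD, Matrix.mul_sub, Matrix.mul_one, Matrix.sub_mul, hUU]
    conv_lhs => rw [hH.spectral_theorem, Unitary.conjStarAlgAut_apply]
  rw [key, Matrix.star_eq_conjTranspose]
  refine (Matrix.PosSemidef.diagonal ?_).mul_mul_conjTranspose_same _
  simp only [Pi.le_def, Pi.zero_apply]
  intro i
  exact Complex.zero_le_real.mpr (by linarith [hev i])

lemma posDef_unique_sq {M N : Matrix (Fin k) (Fin k) ℂ} (hM : M.PosDef) (hN : N.PosDef)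
    (hpsd : (M * M - M).PosSemidef) (heq : M * M - M = N * N - N) : M = N := by
  have h1 : (M - 1).PosSemidef := sub_one_posSemidef hM hpsd
  have h2 : (N - 1).PosSemidef := sub_one_posSemidef hN (heq ▸ hpsd)
  have hM' : (M + (M - 1)).PosSemidef := (hM.add_posSemidef h1).posSemidef
  have hN' : (N + (N - 1)).PosSemidef := (hN.add_posSemidef h2).posSemidef
  have hsq : (M + (M - 1)) ^ 2 = (N + (N - 1)) ^ 2 := by
    have e1 : (M + (M - 1)) ^ 2 = 4 * (M * M - M) + 1 := by noncomm_ring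
    have e2 : (N + (N - 1)) ^ 2 = 4 * (N * N - N) + 1 := by noncomm_ring
    rw [e1, e2, heq]
  have := hM'.eq_of_sq_eq_sq hN' hsq
  have h2 : (2 : ℂ) • M = (2 : ℂ) • N := by
    have h3 : M + M - 1 = N + N - 1 := by
      rw [← add_sub_assoc, ← add_sub_assoc] at this
      exact this
    have hMN : M + M = N + N := by
      have := congrArg (· + 1) h3
      simpa using this
    rw [two_smul, two_smul]
    exact hMN
  exact smul_right_injective _ (two_ne_zero) h2

lemma exists_posDef_sq_sub_eq {R : Matrix (Fin k) (Fin k) ℂ} (hR : R.PosSemidef) :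
    ∃ m : Matrix (Fin k) (Fin k) ℂ, m.PosDef ∧ m * m - m = R := by
  have hH : R.IsHermitian := hR.1
  set U : Matrix (Fin k) (Fin k) ℂ := (hH.eigenvectorUnitary : Matrix (Fin k) (Fin k) ℂ) with hU
  have hUsU : U * star U = 1 := Matrix.mem_unitaryGroup_iff.mp hH.eigenvectorUnitary.2
  have hsUU : star U * U = 1 := Matrix.mem_unitaryGroup_iff'.mp hH.eigenvectorUnitary.2
  set g : ℝ → ℝ := fun x => (1 + Real.sqrt (1 + 4 * x)) / 2 with hg
  have hgpos : ∀ x : ℝ, 0 ≤ x → 0 < g x := by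
    intro x hx
    have := Real.sqrt_nonneg (1 + 4 * x)
    simp only [hg]
    positivity
  have hgsq : ∀ x : ℝ, 0 ≤ x → g x * g x - g x = x := by
    intro x hx
    have h1 : (0:ℝ) ≤ 1 + 4 * x := by linarith
    have h2 := Real.sq_sqrt h1
    simp only [hg]
    nlinarith [h2]
  set d : Fin k → ℂ := fun i => ((g (hH.eigenvalues i) : ℝ) : ℂ) with hd
  have hcancel : ∀ X : Matrix (Fin k) (Fin k) ℂ, star U * (U * X) = X := fun X => by
    rw [← Matrix.mul_assoc, hsUU, Matrix.one_mul]
  refine ⟨U * diagonal d * star U, ?_, ?_⟩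
  · apply posDef_of_posSemidef_isUnit
    · have := (Matrix.PosSemidef.diagonal (d := d) ?_).mul_mul_conjTranspose_same U
      · rwa [← Matrix.star_eq_conjTranspose] at this
      · simp only [Pi.le_def, Pi.zero_apply, hd]
        intro i
        exact Complex.zero_le_real.mpr (hgpos _ (hR.eigenvalues_nonneg i)).le
    · have hUu : IsUnit U := ⟨⟨U, star U, hUsU, hsUU⟩, rfl⟩
      have hsUu : IsUnit (star U) := ⟨⟨star U, U, hsUU, hUsU⟩, rfl⟩
      have hdu : IsUnit (diagonal d) := by
        rw [Matrix.isUnit_iff_isUnit_det, Matrix.det_diagonal]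
        refine IsUnit.mk0 _ (Finset.prod_ne_zero_iff.mpr fun i _ => ?_)
        simp only [hd]
        exact_mod_cast (hgpos _ (hR.eigenvalues_nonneg i)).ne'
      exact (hUu.mul hdu).mul hsUu
  · have hmm : (U * diagonal d * star U) * (U * diagonal d * star U) * 1 =
        U * (diagonal d * diagonal d) * star U := by
      simp only [Matrix.mul_assoc, hcancel, Matrix.mul_one]
    rw [Matrix.mul_one] at hmm
    rw [hmm, diagonal_mul_diagonal, ← Matrix.sub_mul, ← Matrix.mul_sub, Matrix.diagonal_sub]
    have hfun : (fun i => d i * d i - d i) = (RCLike.ofReal ∘ hH.eigenvalues) := by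
      funext i
      have hx := hgsq _ (hR.eigenvalues_nonneg i)
      simp only [hd, Function.comp_apply]
      norm_cast
      exact congrArg Complex.ofReal hx
    rw [hfun]
    conv_rhs => rw [hH.spectral_theorem, Unitary.conjStarAlgAut_apply]

lemma posDef_sqrt {M : Matrix (Fin k) (Fin k) ℂ} (hM : M.PosDef) :
    hM.posSemidef.sqrt.PosDef :=
  posDef_of_posSemidef_isUnit hM.posSemidef.posSemidef_sqrt <|
    isUnit_of_mul_self_isUnit (hM.posSemidef.sqrt_mul_self.symm ▸ hM.isUnit)

/-- Existence of the normalizing positive matrix `h`. -/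
lemma exists_h {P Q : Matrix (Fin k) (Fin k) ℂ} (hP : P.PosDef) (hQ : Q.PosSemidef) :
    ∃ h : Matrix (Fin k) (Fin k) ℂ, h.PosDef ∧ h * P * h - h = Q := by
  set S := hP.posSemidef.sqrt with hSdef
  have hS : S.PosDef := posDef_sqrt hP
  have hSS : S * S = P := hP.posSemidef.sqrt_mul_self
  have hSherm : Sᴴ = S := hP.posSemidef.posSemidef_sqrt.1
  letI := hS.isUnit.invertible
  have hRpsd : (S * Q * S).PosSemidef := by
    have := hQ.mul_mul_conjTranspose_same S
    rwa [hSherm] at this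
  obtain ⟨m, hm, hmeq⟩ := exists_posDef_sq_sub_eq hRpsd
  have hSinv : (S⁻¹)ᴴ = S⁻¹ := by rw [Matrix.conjTranspose_nonsing_inv, hSherm]
  refine ⟨S⁻¹ * m * S⁻¹, ?_, ?_⟩
  · apply posDef_of_posSemidef_isUnit
    · have := hm.posSemidef.mul_mul_conjTranspose_same S⁻¹
      rwa [hSinv] at this
    · exact ((Matrix.isUnit_nonsing_inv_iff.mpr hS.isUnit).mul hm.isUnit).mul
        (Matrix.isUnit_nonsing_inv_iff.mpr hS.isUnit)
  · have key : S⁻¹ * m * S⁻¹ * P * (S⁻¹ * m * S⁻¹) - S⁻¹ * m * S⁻¹ =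
        S⁻¹ * (m * m - m) * S⁻¹ := by
      rw [← hSS]
      rw [Matrix.mul_sub, Matrix.sub_mul]
      congr 1
      simp only [Matrix.mul_assoc, Matrix.inv_mul_cancel_left_of_invertible,
        Matrix.mul_inv_cancel_left_of_invertible, Matrix.mul_inv_of_invertible,
        Matrix.inv_mul_of_invertible, Matrix.mul_one]
    rw [key, hmeq]
    simp only [Matrix.mul_assoc, Matrix.inv_mul_cancel_left_of_invertible,
      Matrix.mul_inv_cancel_left_of_invertible, Matrix.mul_inv_of_invertible,
      Matrix.inv_mul_of_invertible, Matrix.mul_one]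

lemma h_unique {P Q h₁ h₂ : Matrix (Fin k) (Fin k) ℂ} (hP : P.PosDef) (hQ : Q.PosSemidef)
    (hh₁ : h₁.PosDef) (hh₂ : h₂.PosDef)
    (e₁ : h₁ * P * h₁ - h₁ = Q) (e₂ : h₂ * P * h₂ - h₂ = Q) : h₁ = h₂ := by
  set S := hP.posSemidef.sqrt with hSdef
  have hS : S.PosDef := posDef_sqrt hP
  have hSS : S * S = P := hP.posSemidef.sqrt_mul_self
  have hSherm : Sᴴ = S := hP.posSemidef.posSemidef_sqrt.1
  letI := hS.isUnit.invertible
  have hMpd : ∀ {h : Matrix (Fin k) (Fin k) ℂ}, h.PosDef → (S * h * S).PosDef := by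
    intro h hh
    apply posDef_of_posSemidef_isUnit
    · have := hh.posSemidef.mul_mul_conjTranspose_same S
      rwa [hSherm] at this
    · exact (hS.isUnit.mul hh.isUnit).mul hS.isUnit
  have key : ∀ (h : Matrix (Fin k) (Fin k) ℂ), h * P * h - h = Q →
      (S * h * S) * (S * h * S) - (S * h * S) = S * Q * S := by
    intro h e
    rw [← e, Matrix.mul_sub, Matrix.sub_mul, ← hSS]
    simp only [Matrix.mul_assoc]
  have hpsd : ((S * h₁ * S) * (S * h₁ * S) - (S * h₁ * S)).PosSemidef := by
    rw [key h₁ e₁]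
    have := hQ.mul_mul_conjTranspose_same S
    rwa [hSherm] at this
  have hMeq := posDef_unique_sq (hMpd hh₁) (hMpd hh₂) hpsd
    (by rw [key h₁ e₁, key h₂ e₂])
  have := congrArg (fun X => S⁻¹ * X * S⁻¹) hMeq
  simpa only [Matrix.mul_assoc, Matrix.inv_mul_cancel_left_of_invertible,
    Matrix.mul_inv_cancel_left_of_invertible, Matrix.mul_inv_of_invertible,
    Matrix.inv_mul_of_invertible, Matrix.mul_one] using this

lemma rigidity {B : Matrix (Fin n) (Fin k) ℂ} {C : Matrix (Fin k) (Fin n) ℂ}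
    {g : Matrix (Fin k) (Fin k) ℂ} (hg : IsUnit g)
    (h1 : Bᴴ * B - C * Cᴴ = 1)
    (h2 : (B * g)ᴴ * (B * g) - (g⁻¹ * C) * (g⁻¹ * C)ᴴ = 1) :
    gᴴ * g = 1 := by
  letI := hg.invertible
  have hQ : (C * Cᴴ).PosSemidef := posSemidef_self_mul_conjTranspose C
  have hP : (Bᴴ * B).PosDef := by
    rw [sub_eq_iff_eq_add.mp h1]
    exact Matrix.PosDef.one.add_posSemidef hQ
  have hgH : IsUnit gᴴ := by
    rw [← Matrix.star_eq_conjTranspose]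
    exact isUnit_star.mpr hg
  have hh₁ : (g * gᴴ).PosDef :=
    posDef_of_posSemidef_isUnit (posSemidef_self_mul_conjTranspose g) (hg.mul hgH)
  have e₂ : (1 : Matrix (Fin k) (Fin k) ℂ) * (Bᴴ * B) * 1 - 1 = C * Cᴴ := by
    simp only [Matrix.one_mul, Matrix.mul_one]
    rw [sub_eq_iff_eq_add, sub_eq_iff_eq_add.mp h1]
    abel
  have hb : gᴴ * Bᴴ * (B * g) - g⁻¹ * C * (Cᴴ * (gᴴ)⁻¹) = 1 := by
    rw [← h2]
    simp only [Matrix.conjTranspose_mul, Matrix.conjTranspose_nonsing_inv, Matrix.mul_assoc]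
  have e₁ : (g * gᴴ) * (Bᴴ * B) * (g * gᴴ) - (g * gᴴ) = C * Cᴴ := by
    have hc := congrArg (fun X => g * X * gᴴ) hb
    simp only [Matrix.mul_sub, Matrix.sub_mul, Matrix.mul_one, Matrix.mul_assoc,
      Matrix.mul_inv_cancel_left_of_invertible, Matrix.inv_mul_cancel_left_of_invertible,
      Matrix.mul_inv_of_invertible, Matrix.inv_mul_of_invertible] at hc
    have hX : g * (gᴴ * (Bᴴ * (B * (g * gᴴ)))) = g * gᴴ + C * Cᴴ :=
      sub_eq_iff_eq_add.mp hc
    rw [show g * gᴴ * (Bᴴ * B) * (g * gᴴ) = g * (gᴴ * (Bᴴ * (B * (g * gᴴ)))) by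
      simp only [Matrix.mul_assoc], hX]
    abel
  have := h_unique hP hQ hh₁ Matrix.PosDef.one e₁ e₂
  rw [mul_eq_one_comm]
  exact this

lemma glRel_equivalence (n k : ℕ) : Equivalence (glRel n k) := by
  constructor
  · intro p
    exact ⟨1, isUnit_one, by rw [Matrix.mul_one], by rw [inv_one, Matrix.one_mul]⟩
  · rintro p q ⟨g, hg, h1, h2⟩
    letI := hg.invertible
    refine ⟨g⁻¹, Matrix.isUnit_nonsing_inv_iff.mpr hg, ?_, ?_⟩
    · rw [h1, Matrix.mul_inv_cancel_right_of_invertible]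
    · rw [h2, Matrix.nonsing_inv_nonsing_inv _ ((Matrix.isUnit_iff_isUnit_det g).mp hg),
        ← Matrix.mul_assoc, Matrix.mul_inv_of_invertible, Matrix.one_mul]
  · rintro p q r ⟨g, hg, h1, h2⟩ ⟨g', hg', h1', h2'⟩
    refine ⟨g * g', hg.mul hg', ?_, ?_⟩
    · rw [h1', h1, Matrix.mul_assoc]
    · rw [h2', h2, Matrix.mul_inv_rev, Matrix.mul_assoc]

end HKProofAux

open HKProofAux in
/-- Equation (20) of the paper: `X ⊆ Y` and the inclusion `X ↪ Y` induces a bijection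
`X/U(k) ≅ Y/GLₖ(ℂ)`, identifying the hyperKähler quotient `μ⁻¹(i)/U(k)` with
`T*Grₖ(ℂⁿ) = {(B,C) : rk B = k, CB = 0}/GLₖ(ℂ)`. -/
theorem levelSet_mod_unitary_equiv_fullRank_mod_gl (n k : ℕ) :
    levelSet n k ⊆ fullRankSet n k ∧
      ∃ f : Quot (unitaryRel n k) → Quot (glRel n k),
        Function.Bijective f ∧
          ∀ (p : MatPair n k) (hX : p ∈ levelSet n k) (hY : p ∈ fullRankSet n k),
            f (Quot.mk (unitaryRel n k) ⟨p, hX⟩) = Quot.mk (glRel n k) ⟨p, hY⟩ := by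
  have hsub : levelSet n k ⊆ fullRankSet n k := by
    rintro ⟨B, C⟩ ⟨h1, h2⟩
    have hpd : (Bᴴ * B).PosDef := by
      rw [sub_eq_iff_eq_add.mp h1]
      exact Matrix.PosDef.one.add_posSemidef (posSemidef_self_mul_conjTranspose C)
    have hrank := Matrix.rank_conjTranspose_mul_self B
    rw [Matrix.rank_of_isUnit _ hpd.isUnit, Fintype.card_fin] at hrank
    exact ⟨hrank.symm, h2⟩
  let ι : levelSet n k → fullRankSet n k := fun x => ⟨(x : MatPair n k), hsub x.2⟩
  have hresp : ∀ a b : levelSet n k, unitaryRel n k a b →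
      Quot.mk (glRel n k) (ι a) = Quot.mk (glRel n k) (ι b) := by
    rintro a b ⟨u, hu, h1, h2⟩
    exact Quot.sound ⟨u, ⟨⟨u, uᴴ, mul_eq_one_comm.mp hu, hu⟩, rfl⟩, h1, h2⟩
  refine ⟨hsub, Quot.lift (fun x => Quot.mk _ (ι x)) hresp, ⟨?_, ?_⟩, fun p hX hY => rfl⟩
  · -- injective
    intro qa qb
    induction qa using Quot.ind with | _ a => ?_
    induction qb using Quot.ind with | _ b => ?_
    intro h
    have hg : glRel n k (ι a) (ι b) :=
      ((glRel_equivalence n k).eqvGen_iff).mp (Quot.eqvGen_exact h)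
    obtain ⟨g, hgu, e1, e2⟩ := hg
    apply Quot.sound
    refine ⟨g, ?_, e1, e2⟩
    have ha1 := a.2.1
    have hb1 := b.2.1
    rw [show ((ι b : fullRankSet n k) : MatPair n k).1 = (b : MatPair n k).1 from rfl] at e1
    rw [show ((ι b : fullRankSet n k) : MatPair n k).2 = (b : MatPair n k).2 from rfl] at e2
    rw [e1, e2] at hb1
    exact rigidity hgu ha1 hb1
  · -- surjective
    intro q
    induction q using Quot.ind with | _ y => ?_
    obtain ⟨⟨B, C⟩, hy⟩ := y
    have hP : (Bᴴ * B).PosDef :=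
      posDef_of_posSemidef_isUnit (posSemidef_conjTranspose_mul_self B)
        (isUnit_conjTranspose_mul_self hy.1)
    have hQ : (C * Cᴴ).PosSemidef := posSemidef_self_mul_conjTranspose C
    obtain ⟨h, hh, hheq⟩ := exists_h hP hQ
    set g := hh.posSemidef.sqrt with hgdef
    have hgpd : g.PosDef := posDef_sqrt hh
    have hgherm : gᴴ = g := hh.posSemidef.posSemidef_sqrt.1
    have hgg : g * g = h := hh.posSemidef.sqrt_mul_self
    letI := hgpd.isUnit.invertible
    have hginv : (g⁻¹)ᴴ = g⁻¹ := by rw [Matrix.conjTranspose_nonsing_inv, hgherm]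
    have hmemX : (B * g, g⁻¹ * C) ∈ levelSet n k := by
      constructor
      · show (B * g)ᴴ * (B * g) - (g⁻¹ * C) * (g⁻¹ * C)ᴴ = 1
        rw [Matrix.conjTranspose_mul, Matrix.conjTranspose_mul, hgherm, hginv]
        have hc := congrArg (fun X => g⁻¹ * X * g⁻¹) hheq
        simp only [Matrix.mul_sub, Matrix.sub_mul] at hc
        rw [← hgg] at hc
        simp only [Matrix.mul_assoc, Matrix.inv_mul_cancel_left_of_invertible,
          Matrix.mul_inv_cancel_left_of_invertible, Matrix.mul_inv_of_invertible,
          Matrix.inv_mul_of_invertible, Matrix.mul_one] at hc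
        rw [show g * Bᴴ * (B * g) = g * (Bᴴ * (B * g)) by simp only [Matrix.mul_assoc],
          show g⁻¹ * C * (Cᴴ * g⁻¹) = g⁻¹ * (C * (Cᴴ * g⁻¹)) by simp only [Matrix.mul_assoc],
          ← hc]
        abel
      · show (g⁻¹ * C) * (B * g) = 0
        rw [Matrix.mul_assoc, ← Matrix.mul_assoc C, hy.2, Matrix.zero_mul, Matrix.mul_zero]
    exact ⟨Quot.mk _ ⟨(B * g, g⁻¹ * C), hmemX⟩,
      (Quot.sound ⟨g, hgpd.isUnit, rfl, rfl⟩).symm⟩
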